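/- In a finite discounted MDP with |r(s,a)| ≤ Rmax for all (s,a), suppose V̂ : S → ℝ satisfies max_{s∈S} |V*(s) − V̂(s)| ≤ ε_v for some ε_v ≥ 0. Let π_V̂ be a stationary deterministic 1-step greedy policy with respect to V̂ under the true model, i.e., π_V̂(s) ∈ argmax_{a∈A} [r(s,a) + γ·Σ_{s'} p(s'|s,a)·V̂(s')] for every s ∈ S. Then for every state s, V*(s) − V^{π_V̂}(s) ≤ 2γ·ε_v/(1−γ). -/

import Mathlib

/-- State distribution at time `t` of a (possibly non-stationary) deterministic policy `π`
started from `s0`, under transition model `N`. -/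
noncomputable def stateDist {S A : Type*} [Fintype S] [DecidableEq S]
    (N : S → A → S → ℝ) (π : ℕ → S → A) (s0 : S) : ℕ → S → ℝ
  | 0 => fun s => if s = s0 then 1 else 0
  | t + 1 => fun s' => ∑ s : S, stateDist N π s0 t s * N s (π t s) s'

/-- Discounted value of a (possibly non-stationary) deterministic policy. -/
noncomputable def value {S A : Type*} [Fintype S] [DecidableEq S]
    (p : S → A → S → ℝ) (r : S → A → ℝ) (γ : ℝ) (π : ℕ → S → A) (s0 : S) : ℝ :=
  ∑' t : ℕ, γ ^ t * ∑ s : S, stateDist p π s0 t s * r s (π t s)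

/-- Optimal value function: supremum of values over all deterministic policies. -/
noncomputable def vStar {S A : Type*} [Fintype S] [DecidableEq S]
    (p : S → A → S → ℝ) (r : S → A → ℝ) (γ : ℝ) (s0 : S) : ℝ :=
  ⨆ π : ℕ → S → A, value p r γ π s0

section Aux

variable {S A : Type*} [Fintype S] [DecidableEq S]
variable {p : S → A → S → ℝ} {r : S → A → ℝ} {γ Rmax : ℝ}

lemma stateDist_nonneg (hp : ∀ s a s', 0 ≤ p s a s') (π : ℕ → S → A) (s0 : S) :
    ∀ t s, 0 ≤ stateDist p π s0 t s := by
  intro t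
  induction t with
  | zero => intro s; simp only [stateDist]; split <;> norm_num
  | succ t ih =>
    intro s
    simp only [stateDist]
    exact Finset.sum_nonneg fun s' _ => mul_nonneg (ih s') (hp _ _ _)

lemma stateDist_sum_eq_one (hp_sum : ∀ s a, ∑ s' : S, p s a s' = 1) (π : ℕ → S → A) (s0 : S) :
    ∀ t, ∑ s : S, stateDist p π s0 t s = 1 := by
  intro t
  induction t with
  | zero => simp [stateDist]
  | succ t ih =>
    simp only [stateDist]
    rw [Finset.sum_comm]
    simp_rw [← Finset.mul_sum, hp_sum, mul_one]
    exact ih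

lemma inner_abs_le (hp : ∀ s a s', 0 ≤ p s a s') (hp_sum : ∀ s a, ∑ s' : S, p s a s' = 1)
    (hr : ∀ s a, |r s a| ≤ Rmax) (π : ℕ → S → A) (s0 : S) (t : ℕ) :
    |∑ s : S, stateDist p π s0 t s * r s (π t s)| ≤ Rmax := by
  calc |∑ s : S, stateDist p π s0 t s * r s (π t s)|
      ≤ ∑ s : S, |stateDist p π s0 t s * r s (π t s)| := Finset.abs_sum_le_sum_abs _ _
    _ = ∑ s : S, stateDist p π s0 t s * |r s (π t s)| := by
        refine Finset.sum_congr rfl fun s _ => ?_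
        rw [abs_mul, abs_of_nonneg (stateDist_nonneg hp π s0 t s)]
    _ ≤ ∑ s : S, stateDist p π s0 t s * Rmax :=
        Finset.sum_le_sum fun s _ =>
          mul_le_mul_of_nonneg_left (hr _ _) (stateDist_nonneg hp π s0 t s)
    _ = Rmax := by rw [← Finset.sum_mul, stateDist_sum_eq_one hp_sum, one_mul]

lemma value_summable (hp : ∀ s a s', 0 ≤ p s a s') (hp_sum : ∀ s a, ∑ s' : S, p s a s' = 1)
    (hγ0 : 0 < γ) (hγ1 : γ < 1) (hr : ∀ s a, |r s a| ≤ Rmax) (π : ℕ → S → A) (s0 : S) :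
    Summable (fun t => γ ^ t * ∑ s : S, stateDist p π s0 t s * r s (π t s)) := by
  apply Summable.of_norm_bounded (g := fun t => Rmax * γ ^ t)
    ((summable_geometric_of_lt_one hγ0.le hγ1).mul_left Rmax)
  intro t
  rw [Real.norm_eq_abs, abs_mul, abs_pow, abs_of_nonneg hγ0.le, mul_comm]
  exact mul_le_mul_of_nonneg_right (inner_abs_le hp hp_sum hr π s0 t) (pow_nonneg hγ0.le t)

lemma abs_value_le (hp : ∀ s a s', 0 ≤ p s a s') (hp_sum : ∀ s a, ∑ s' : S, p s a s' = 1)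
    (hγ0 : 0 < γ) (hγ1 : γ < 1) (hr : ∀ s a, |r s a| ≤ Rmax) (π : ℕ → S → A) (s0 : S) :
    |value p r γ π s0| ≤ Rmax / (1 - γ) := by
  have hsum := value_summable hp hp_sum hγ0 hγ1 hr π s0
  have hsumR : Summable (fun t : ℕ => Rmax * γ ^ t) :=
    (summable_geometric_of_lt_one hγ0.le hγ1).mul_left Rmax
  have h1 : |value p r γ π s0| ≤ ∑' t : ℕ, Rmax * γ ^ t := by
    calc |value p r γ π s0|
        ≤ ∑' t : ℕ, ‖γ ^ t * ∑ s : S, stateDist p π s0 t s * r s (π t s)‖ :=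
          norm_tsum_le_tsum_norm hsum.norm
      _ ≤ ∑' t : ℕ, Rmax * γ ^ t := by
          apply Summable.tsum_le_tsum _ hsum.norm hsumR
          intro t
          rw [Real.norm_eq_abs, abs_mul, abs_pow, abs_of_nonneg hγ0.le, mul_comm]
          exact mul_le_mul_of_nonneg_right (inner_abs_le hp hp_sum hr π s0 t)
            (pow_nonneg hγ0.le t)
  rwa [tsum_mul_left, tsum_geometric_of_lt_one hγ0.le hγ1, ← div_eq_mul_inv] at h1

lemma stateDist_succ_shift (π : ℕ → S → A) (s0 : S) :
    ∀ t s', stateDist p π s0 (t + 1) s' =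
      ∑ s1 : S, p s0 (π 0 s0) s1 * stateDist p (fun k => π (k + 1)) s1 t s' := by
  intro t
  induction t with
  | zero =>
    intro s'
    simp only [stateDist, ite_mul, one_mul, zero_mul, mul_ite, mul_one, mul_zero]
    rw [Finset.sum_ite_eq' Finset.univ s0, Finset.sum_ite_eq Finset.univ s']
    simp
  | succ t ih =>
    intro s'
    show (∑ s : S, stateDist p π s0 (t + 1) s * p s (π (t + 1) s) s') = _
    simp_rw [ih, Finset.sum_mul]
    rw [Finset.sum_comm]
    refine Finset.sum_congr rfl fun s1 _ => ?_
    show _ = p s0 (π 0 s0) s1 *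
      ∑ s : S, stateDist p (fun k => π (k + 1)) s1 t s * p s (π (t + 1) s) s'
    rw [Finset.mul_sum]
    exact Finset.sum_congr rfl fun s _ => by ring

lemma value_bellman (hp : ∀ s a s', 0 ≤ p s a s') (hp_sum : ∀ s a, ∑ s' : S, p s a s' = 1)
    (hγ0 : 0 < γ) (hγ1 : γ < 1) (hr : ∀ s a, |r s a| ≤ Rmax) (π : ℕ → S → A) (s0 : S) :
    value p r γ π s0 = r s0 (π 0 s0) +
      γ * ∑ s1 : S, p s0 (π 0 s0) s1 * value p r γ (fun k => π (k + 1)) s1 := by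
  have hsum := value_summable hp hp_sum hγ0 hγ1 hr π s0
  rw [value, Summable.tsum_eq_zero_add hsum]
  congr 1
  · simp [stateDist, ite_mul, one_mul, zero_mul]
  · have hterm : ∀ t : ℕ,
        γ ^ (t + 1) * ∑ s' : S, stateDist p π s0 (t + 1) s' * r s' (π (t + 1) s') =
        ∑ s1 : S, p s0 (π 0 s0) s1 *
          (γ * (γ ^ t * ∑ s' : S,
            stateDist p (fun k => π (k + 1)) s1 t s' * r s' (π (t + 1) s'))) := by
      intro t
      simp_rw [stateDist_succ_shift π s0 t, Finset.sum_mul, Finset.mul_sum]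
      rw [Finset.sum_comm]
      refine Finset.sum_congr rfl fun s1 _ => Finset.sum_congr rfl fun s' _ => ?_
      ring
    simp_rw [hterm]
    have hsummable : ∀ s1 : S, Summable (fun t : ℕ => p s0 (π 0 s0) s1 *
        (γ * (γ ^ t * ∑ s' : S,
          stateDist p (fun k => π (k + 1)) s1 t s' * r s' (π (t + 1) s')))) := by
      intro s1
      exact ((value_summable hp hp_sum hγ0 hγ1 hr (fun k => π (k + 1)) s1).mul_left γ).mul_left _
    rw [Summable.tsum_finsetSum (fun s1 _ => hsummable s1)]
    rw [Finset.mul_sum]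
    refine Finset.sum_congr rfl fun s1 _ => ?_
    rw [tsum_mul_left, tsum_mul_left]
    show p s0 (π 0 s0) s1 * (γ * value p r γ (fun k => π (k + 1)) s1) = _
    ring

lemma bddAbove_value (hp : ∀ s a s', 0 ≤ p s a s') (hp_sum : ∀ s a, ∑ s' : S, p s a s' = 1)
    (hγ0 : 0 < γ) (hγ1 : γ < 1) (hr : ∀ s a, |r s a| ≤ Rmax) (s0 : S) :
    BddAbove (Set.range fun π : ℕ → S → A => value p r γ π s0) := by
  refine ⟨Rmax / (1 - γ), ?_⟩
  rintro x ⟨π, rfl⟩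
  exact (abs_le.mp (abs_value_le hp hp_sum hγ0 hγ1 hr π s0)).2

end Aux

/-- Suboptimality of the 1-step greedy policy with respect to an approximate value function. -/
theorem greedy_policy_suboptimality
    {S A : Type*} [Fintype S] [DecidableEq S] [Nonempty S] [Fintype A] [Nonempty A]
    (p : S → A → S → ℝ) (r : S → A → ℝ) (γ Rmax εv : ℝ)
    (hp_nonneg : ∀ s a s', 0 ≤ p s a s')
    (hp_sum : ∀ s a, ∑ s' : S, p s a s' = 1)
    (hγ0 : 0 < γ) (hγ1 : γ < 1)
    (hr : ∀ s a, |r s a| ≤ Rmax)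
    (hεv : 0 ≤ εv)
    (Vhat : S → ℝ)
    (hVhat : ∀ s, |vStar p r γ s - Vhat s| ≤ εv)
    (πg : S → A)
    (hgreedy : ∀ s a, r s a + γ * ∑ s' : S, p s a s' * Vhat s' ≤
      r s (πg s) + γ * ∑ s' : S, p s (πg s) s' * Vhat s')
    (s : S) :
    vStar p r γ s - value p r γ (fun _ => πg) s ≤ 2 * γ * εv / (1 - γ) := by
  classical
  set W : S → ℝ := fun s => value p r γ (fun _ => πg) s with hWdef
  set V : S → ℝ := fun s => vStar p r γ s with hVdef
  have hne : (Finset.univ : Finset S).Nonempty := Finset.univ_nonempty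
  set Δ : ℝ := Finset.univ.sup' hne (fun s => V s - W s) with hΔdef
  have hle_Δ : ∀ s1 : S, V s1 - W s1 ≤ Δ := fun s1 =>
    Finset.le_sup' (fun s => V s - W s) (Finset.mem_univ s1)
  -- value of vStar at any state is bounded below by swap with Vhat, etc.
  have hswap : ∀ (s0 : S) (a : A) (f g : S → ℝ), (∀ s1, |f s1 - g s1| ≤ εv) →
      ∑ s1 : S, p s0 a s1 * f s1 ≤ (∑ s1 : S, p s0 a s1 * g s1) + εv := by
    intro s0 a f g h
    have h1 : ∑ s1 : S, p s0 a s1 * f s1 - ∑ s1 : S, p s0 a s1 * g s1 =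
        ∑ s1 : S, p s0 a s1 * (f s1 - g s1) := by
      rw [← Finset.sum_sub_distrib]
      exact Finset.sum_congr rfl fun s1 _ => by ring
    have h2 : ∑ s1 : S, p s0 a s1 * (f s1 - g s1) ≤ ∑ s1 : S, p s0 a s1 * εv := by
      refine Finset.sum_le_sum fun s1 _ => ?_
      exact mul_le_mul_of_nonneg_left ((abs_le.mp (h s1)).2.trans_eq' rfl) (hp_nonneg _ _ _)
    rw [← Finset.sum_mul, hp_sum, one_mul] at h2
    linarith
  have hbdd := fun s0 : S => bddAbove_value (A := A) hp_nonneg hp_sum hγ0 hγ1 hr s0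
  -- Bellman for the stationary greedy policy
  have hWbell : ∀ s0 : S, W s0 = r s0 (πg s0) + γ * ∑ s1 : S, p s0 (πg s0) s1 * W s1 := by
    intro s0
    exact value_bellman hp_nonneg hp_sum hγ0 hγ1 hr (fun _ => πg) s0
  -- key one-step bound on V*
  have hVkey : ∀ s0 : S,
      V s0 ≤ r s0 (πg s0) + γ * ∑ s1 : S, p s0 (πg s0) s1 * V s1 + 2 * γ * εv := by
    intro s0
    show vStar p r γ s0 ≤ _
    rw [vStar]
    apply ciSup_le
    intro π
    rw [value_bellman hp_nonneg hp_sum hγ0 hγ1 hr π s0]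
    have hs1 : ∑ s1 : S, p s0 (π 0 s0) s1 * value p r γ (fun k => π (k + 1)) s1 ≤
        ∑ s1 : S, p s0 (π 0 s0) s1 * V s1 := by
      refine Finset.sum_le_sum fun s1 _ => ?_
      refine mul_le_mul_of_nonneg_left ?_ (hp_nonneg _ _ _)
      exact le_ciSup (hbdd s1) (fun k => π (k + 1))
    have hs2 : ∑ s1 : S, p s0 (π 0 s0) s1 * V s1 ≤
        (∑ s1 : S, p s0 (π 0 s0) s1 * Vhat s1) + εv :=
      hswap s0 (π 0 s0) V Vhat hVhat
    have hs3 := hgreedy s0 (π 0 s0)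
    have hs4 : ∑ s1 : S, p s0 (πg s0) s1 * Vhat s1 ≤
        (∑ s1 : S, p s0 (πg s0) s1 * V s1) + εv := by
      refine hswap s0 (πg s0) Vhat V fun s1 => ?_
      rw [abs_sub_comm]; exact hVhat s1
    nlinarith [hγ0.le]
  -- key inequality on Δ
  obtain ⟨s₀, -, hs₀⟩ := Finset.exists_mem_eq_sup' hne (fun s => V s - W s)
  have key : Δ ≤ 2 * γ * εv + γ * Δ := by
    have h1 := hVkey s₀
    have h2 := hWbell s₀
    have h3 : ∑ s1 : S, p s₀ (πg s₀) s1 * V s1 - ∑ s1 : S, p s₀ (πg s₀) s1 * W s1 ≤ Δ := by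
      have he : ∑ s1 : S, p s₀ (πg s₀) s1 * V s1 - ∑ s1 : S, p s₀ (πg s₀) s1 * W s1 =
          ∑ s1 : S, p s₀ (πg s₀) s1 * (V s1 - W s1) := by
        rw [← Finset.sum_sub_distrib]
        exact Finset.sum_congr rfl fun s1 _ => by ring
      rw [he]
      calc ∑ s1 : S, p s₀ (πg s₀) s1 * (V s1 - W s1)
          ≤ ∑ s1 : S, p s₀ (πg s₀) s1 * Δ :=
            Finset.sum_le_sum fun s1 _ =>
              mul_le_mul_of_nonneg_left (hle_Δ s1) (hp_nonneg _ _ _)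
        _ = Δ := by rw [← Finset.sum_mul, hp_sum, one_mul]
    have hΔeq : Δ = V s₀ - W s₀ := hs₀
    nlinarith [hγ0.le]
  have h1γ : 0 < 1 - γ := by linarith
  have hΔfin : Δ ≤ 2 * γ * εv / (1 - γ) := by
    rw [le_div_iff₀ h1γ]
    nlinarith
  exact (hle_Δ s).trans hΔfin
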